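/- Let F be a field, A an n×n matrix over F, Q ∈ F[X] monic of degree d ≥ 1, and q ≥ 1 such that Q^q divides the characteristic polynomial of A. Suppose adj(X·I − A) = Σ_k Cₖ(X)·Q(X)^k where each Cₖ is an n×n polynomial matrix all of whose entries have degree < d (the base-Q expansion of the adjugate). Then Q(A)·C₀ = 0 and Q(A)·Cₖ = C_{k−1} for every 1 ≤ k ≤ q−1, where Q(A) is the evaluation of Q at A acting by matrix multiplication on polynomial matrices. -/

import Mathlib

open Polynomial Matrix

private lemma charmatrix_eq' {F : Type*} [Field F] {n : ℕ} (A : Matrix (Fin n) (Fin n) F) :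
    charmatrix A = (X : Polynomial F) • (1 : Matrix (Fin n) (Fin n) (Polynomial F))
      - A.map Polynomial.C := by
  ext i j
  by_cases h : i = j
  · subst h
    simp [charmatrix_apply_eq, Matrix.smul_apply, Matrix.one_apply, Matrix.sub_apply,
      Matrix.map_apply]
  · simp [charmatrix_apply_ne _ _ _ h, Matrix.smul_apply, Matrix.one_apply, h,
      Matrix.sub_apply, Matrix.map_apply]

private lemma pow_wit {F : Type*} [Field F] {n : ℕ} (A : Matrix (Fin n) (Fin n) F) (k : ℕ) :
    ∃ D : Matrix (Fin n) (Fin n) (Polynomial F),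
      (X : Polynomial F) ^ k • (1 : Matrix (Fin n) (Fin n) (Polynomial F))
          - (A ^ k).map Polynomial.C = charmatrix A * D
        ∧ charmatrix A * D = D * charmatrix A := by
  induction k with
  | zero =>
    refine ⟨0, ?_, by simp⟩
    simp [Matrix.map_one]
  | succ k ih =>
    obtain ⟨D, h1, h2⟩ := ih
    set a : Matrix (Fin n) (Fin n) (Polynomial F) := A.map Polynomial.C with ha
    set mk : Matrix (Fin n) (Fin n) (Polynomial F) := (A ^ k).map Polynomial.C with hmk
    have hcomm : mk * a = a * mk := by
      rw [ha, hmk, ← Matrix.map_mul, ← Matrix.map_mul, ← pow_succ, ← pow_succ']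
    have hsucc : (A ^ (k+1)).map Polynomial.C = a * mk := by
      rw [ha, hmk, ← Matrix.map_mul, ← pow_succ']
    refine ⟨(X : Polynomial F) • D + mk, ?_, ?_⟩
    · rw [mul_add, mul_smul_comm, ← h1, charmatrix_eq' A, sub_mul, smul_mul_assoc, one_mul,
        hsucc, smul_sub, smul_smul, ← pow_succ']
      abel
    · rw [mul_add, add_mul, mul_smul_comm, smul_mul_assoc, h2]
      congr 1
      rw [charmatrix_eq' A, mul_sub, sub_mul, mul_smul_comm, smul_mul_assoc, mul_one, one_mul,
        hcomm]

private lemma map_C_smul {F : Type*} [Field F] {n : ℕ} (a : F)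
    (B : Matrix (Fin n) (Fin n) F) :
    (a • B).map (Polynomial.C (R := F)) = Polynomial.C a • B.map Polynomial.C := by
  ext i j
  simp [Matrix.map_apply, Matrix.smul_apply, smul_eq_mul, _root_.map_mul]

private lemma exists_wit {F : Type*} [Field F] {n : ℕ} (A : Matrix (Fin n) (Fin n) F)
    (Q : Polynomial F) :
    ∃ D : Matrix (Fin n) (Fin n) (Polynomial F),
      Q • (1 : Matrix (Fin n) (Fin n) (Polynomial F)) - ((aeval A Q).map Polynomial.C)
          = charmatrix A * D ∧ charmatrix A * D = D * charmatrix A := by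
  induction Q using Polynomial.induction_on' with
  | add p r hp hr =>
    obtain ⟨D1, h11, h12⟩ := hp
    obtain ⟨D2, h21, h22⟩ := hr
    refine ⟨D1 + D2, ?_, by rw [mul_add, h12, h22, add_mul]⟩
    have hmap : ((aeval A (p + r)).map Polynomial.C)
        = (aeval A p).map Polynomial.C + (aeval A r).map Polynomial.C := by
      rw [map_add]
      exact Matrix.map_add _ (fun x y => map_add Polynomial.C x y) _ _
    rw [mul_add, ← h11, ← h21, hmap, add_smul]
    abel
  | monomial k a =>
    obtain ⟨D, h1, h2⟩ := pow_wit A k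
    refine ⟨Polynomial.C a • D, ?_, ?_⟩
    · have haeval : (aeval A (monomial k a)).map Polynomial.C
          = Polynomial.C a • (A ^ k).map Polynomial.C := by
        rw [aeval_monomial]
        have : (algebraMap F (Matrix (Fin n) (Fin n) F)) a * A ^ k = a • A ^ k := by
          rw [Algebra.algebraMap_eq_smul_one, smul_mul_assoc, one_mul]
        rw [this, map_C_smul]
      rw [mul_smul_comm, ← h1, haeval, smul_sub, ← smul_assoc, smul_eq_mul,
        ← Polynomial.C_mul_X_pow_eq_monomial]
    · rw [mul_smul_comm, smul_mul_assoc, h2]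

private lemma poly_unique {F : Type*} [Field F] (Q : Polynomial F) (hQm : Q.Monic) :
    ∀ (q : ℕ) (m : ℕ) (g : Polynomial F) (f : ℕ → Polynomial F),
      (∀ k, (f k).degree < Q.degree) →
      (∑ k ∈ Finset.range m, Q ^ k * f k) = Q ^ q * g →
      ∀ k, k < q → k < m → f k = 0 := by
  intro q
  induction q with
  | zero => intro m g f _ _ k hk; omega
  | succ q ih =>
    intro m g f hdeg hsum k hk hkm
    obtain ⟨m', rfl⟩ : ∃ m', m = m' + 1 := ⟨m - 1, by omega⟩
    rw [Finset.sum_range_succ' (fun k => Q ^ k * f k) m'] at hsum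
    simp only [pow_zero, one_mul] at hsum
    have h0 : f 0 = 0 := by
      refine Polynomial.eq_zero_of_dvd_of_degree_lt ?_ (hdeg 0)
      have : f 0 = Q ^ (q + 1) * g - ∑ x ∈ Finset.range m', Q ^ (x + 1) * f (x + 1) := by
        rw [← hsum]; ring
      rw [this]
      refine dvd_sub (Dvd.dvd.mul_right (dvd_pow_self Q (by omega)) g) ?_
      exact Finset.dvd_sum fun i _ => Dvd.dvd.mul_right (dvd_pow_self Q (by omega)) _
    rw [h0, add_zero] at hsum
    have hsum2 : ∑ x ∈ Finset.range m', Q ^ x * f (x + 1) = Q ^ q * g := by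
      have hQ0 : Q ≠ 0 := hQm.ne_zero
      apply mul_left_cancel₀ hQ0
      rw [Finset.mul_sum, show Q * (Q ^ q * g) = Q ^ (q + 1) * g by ring, ← hsum]
      refine Finset.sum_congr rfl fun x _ => by ring
    have := ih m' g (fun k => f (k + 1)) (fun k => hdeg (k + 1)) hsum2
    match k with
    | 0 => exact h0
    | k + 1 => exact this k (by omega) (by omega)

/-- Let `Q` be monic of degree `d ≥ 1` with `Q^q` dividing the characteristic
polynomial of `A` (`q ≥ 1`), and let `adj(X·I − A) = Σ_k Cₖ(X)·Q(X)^k` be the base-`Q`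
expansion of the adjugate (all entries of each `Cₖ` of degree `< d`).  Then
`Q(A)·C₀ = 0` and `Q(A)·Cₖ = C_{k−1}` for `1 ≤ k ≤ q − 1`. -/
theorem baseQ_expansion_adjugate_chain
    (F : Type*) [Field F] (n : ℕ) (A : Matrix (Fin n) (Fin n) F)
    (Q : Polynomial F) (d q : ℕ) (hQ : Q.Monic) (hd : Q.natDegree = d) (hd1 : 1 ≤ d)
    (hq : 1 ≤ q) (hdvd : Q ^ q ∣ Matrix.charpoly A)
    (C : ℕ → Matrix (Fin n) (Fin n) (Polynomial F))
    (hdeg : ∀ (k : ℕ) (i j : Fin n), (C k i j).degree < (d : ℕ))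
    (N : ℕ)
    (hexp : Matrix.adjugate (Matrix.charmatrix A) = ∑ k ∈ Finset.range N, Q ^ k • C k) :
    ((Polynomial.aeval A Q).map Polynomial.C) * C 0 = 0 ∧
    ∀ k : ℕ, 1 ≤ k → k ≤ q - 1 →
      ((Polynomial.aeval A Q).map Polynomial.C) * C k = C (k - 1) := by
  classical
  obtain ⟨Rp, hR⟩ := hdvd
  obtain ⟨D, hw1, hw2⟩ := exists_wit A Q
  set c : Matrix (Fin n) (Fin n) (Polynomial F) := (aeval A Q).map Polynomial.C with hc
  have hQne : Q ≠ 0 := hQ.ne_zero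
  have hQdeg : Q.degree = (d : ℕ) := by rw [Polynomial.degree_eq_natDegree hQne, hd]
  have hchmonic : (Matrix.charpoly A).Monic := Matrix.charpoly_monic A
  have hqd : q * d ≤ n := by
    have h1 := Polynomial.natDegree_le_of_dvd ⟨Rp, hR⟩ hchmonic.ne_zero
    rwa [Polynomial.natDegree_pow, hd, Matrix.charpoly_natDegree_eq_dim, Fintype.card_fin] at h1
  -- entries of the adjugate have degree < N*d
  have hadj : ∀ i j, ((adjugate (charmatrix A)) i j).degree < ((N * d : ℕ) : WithBot ℕ) := by
    intro i j
    have hentry : (adjugate (charmatrix A)) i j = ∑ k ∈ Finset.range N, Q ^ k * C k i j := by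
      rw [hexp, Matrix.sum_apply]
      exact Finset.sum_congr rfl fun k _ => by
        rw [Matrix.smul_apply, smul_eq_mul]
    rw [hentry]
    refine lt_of_le_of_lt (Polynomial.degree_sum_le _ _) ?_
    rw [Finset.sup_lt_iff (WithBot.bot_lt_coe _)]
    intro k hk
    rw [Finset.mem_range] at hk
    rw [Polynomial.degree_mul]
    have hdegQk : (Q ^ k).degree = ((k * d : ℕ) : WithBot ℕ) := by
      rw [Polynomial.degree_eq_natDegree (hQ.pow k).ne_zero, Polynomial.natDegree_pow, hd]
    rw [hdegQk]
    calc ((k * d : ℕ) : WithBot ℕ) + (C k i j).degree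
        < ((k * d : ℕ) : WithBot ℕ) + ((d : ℕ) : WithBot ℕ) :=
          WithBot.add_lt_add_left (WithBot.coe_ne_bot) (hdeg k i j)
      _ = ((k * d + d : ℕ) : WithBot ℕ) := by rw [Nat.cast_add]
      _ ≤ ((N * d : ℕ) : WithBot ℕ) := by
          exact_mod_cast Nat.le_of_eq (by ring) |>.trans
            (Nat.mul_le_mul_right d (by omega) : (k + 1) * d ≤ N * d)
  have hn1 : 1 ≤ n := le_trans (by nlinarith) hqd
  have hdet : (charmatrix A).det = Matrix.charpoly A := rfl
  have hnN : n ≤ N * d := by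
    have i0 : Fin n := ⟨0, by omega⟩
    have hmul := Matrix.adjugate_mul (charmatrix A)
    have hentry : Matrix.charpoly A = (adjugate (charmatrix A) * charmatrix A) i0 i0 := by
      rw [hmul, hdet, Matrix.smul_apply, Matrix.one_apply_eq, smul_eq_mul, mul_one]
    have hdegle : (Matrix.charpoly A).degree ≤ ((N * d : ℕ) : WithBot ℕ) := by
      rw [hentry, Matrix.mul_apply]
      refine le_trans (Polynomial.degree_sum_le _ _) ?_
      rw [Finset.sup_le_iff]
      intro l _
      rw [Polynomial.degree_mul]
      have h1 : (charmatrix A l i0).degree ≤ 1 := by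
        by_cases h : l = i0
        · subst h
          rw [charmatrix_apply_eq]
          exact le_of_eq (Polynomial.degree_X_sub_C _)
        · rw [charmatrix_apply_ne _ _ _ h, Polynomial.degree_neg]
          exact le_trans Polynomial.degree_C_le (by exact_mod_cast Nat.zero_le 1)
      calc ((adjugate (charmatrix A)) i0 l).degree + (charmatrix A l i0).degree
          ≤ ((adjugate (charmatrix A)) i0 l).degree + 1 := add_le_add_right h1 _
        _ ≤ ((N * d : ℕ) : WithBot ℕ) := Nat.WithBot.add_one_le_of_lt (hadj i0 l)
    rw [Matrix.charpoly_degree_eq_dim, Fintype.card_fin] at hdegle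
    exact_mod_cast hdegle
  have hqN : q ≤ N := Nat.le_of_mul_le_mul_right (le_trans hqd hnN) (by omega)
  -- the key identity
  have hc1 : c = Q • (1 : Matrix (Fin n) (Fin n) (Polynomial F)) - charmatrix A * D := by
    rw [← hw1]; abel
  have hcadj : c * adjugate (charmatrix A)
      = Q • adjugate (charmatrix A) - Q ^ q • (Rp • D) := by
    rw [hc1, sub_mul, smul_mul_assoc, one_mul, hw2, mul_assoc, Matrix.mul_adjugate, hdet, hR]
    congr 1
    rw [mul_smul_comm, mul_one]
    exact mul_smul _ _ _
  have hkey : ∑ k ∈ Finset.range N, Q ^ k • (c * C k)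
      = (∑ k ∈ Finset.range N, Q ^ (k + 1) • C k) - Q ^ q • (Rp • D) := by
    have l1 : c * adjugate (charmatrix A) = ∑ k ∈ Finset.range N, Q ^ k • (c * C k) := by
      rw [hexp, Finset.mul_sum]
      exact Finset.sum_congr rfl fun k _ => mul_smul_comm _ _ _
    have l2 : Q • adjugate (charmatrix A) = ∑ k ∈ Finset.range N, Q ^ (k + 1) • C k := by
      rw [hexp, Finset.smul_sum]
      exact Finset.sum_congr rfl fun k _ => by rw [smul_smul, ← pow_succ']
    rw [← l1, hcadj, l2]
  -- entrywise consequence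
  have hzero : ∀ (i j : Fin n) (k : ℕ), k < q → k < N + 1 →
      ((if k < N then (c * C k) i j else 0) - (if k = 0 then 0 else C (k - 1) i j)) = 0 := by
    intro i j
    have hcC : ∀ k, ((c * C k) i j).degree < Q.degree := by
      intro k
      rw [hQdeg, Matrix.mul_apply]
      refine lt_of_le_of_lt (Polynomial.degree_sum_le _ _) ?_
      rw [Finset.sup_lt_iff (WithBot.bot_lt_coe _)]
      intro l _
      refine lt_of_le_of_lt (Polynomial.degree_mul_le _ _) ?_
      have hcl : (c i l).degree ≤ 0 := by
        rw [hc, Matrix.map_apply]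
        exact Polynomial.degree_C_le
      calc (c i l).degree + (C k l j).degree ≤ 0 + (C k l j).degree :=
            add_le_add_left hcl _
        _ = (C k l j).degree := zero_add _
        _ < ((d : ℕ) : WithBot ℕ) := hdeg k l j
    refine poly_unique Q hQ q (N + 1) (-(Rp * D i j))
      (fun k => (if k < N then (c * C k) i j else 0) - (if k = 0 then 0 else C (k - 1) i j))
      ?_ ?_
    · intro k
      refine lt_of_le_of_lt (Polynomial.degree_sub_le _ _) (max_lt ?_ ?_)
      · by_cases h : k < N
        · rw [if_pos h]; exact hcC k
        · rw [if_neg h, Polynomial.degree_zero, hQdeg]; exact WithBot.bot_lt_coe _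
      · by_cases h : k = 0
        · rw [if_pos h, Polynomial.degree_zero, hQdeg]; exact WithBot.bot_lt_coe _
        · rw [if_neg h, hQdeg]; exact hdeg _ i j
    · have hent := congrArg (fun M : Matrix (Fin n) (Fin n) (Polynomial F) => M i j) hkey
      simp only [Matrix.sum_apply, Matrix.smul_apply, Matrix.sub_apply, smul_eq_mul] at hent
      have split : ∀ k ∈ Finset.range (N + 1),
          Q ^ k * ((if k < N then (c * C k) i j else 0) -
            (if k = 0 then 0 else C (k - 1) i j))
          = Q ^ k * (if k < N then (c * C k) i j else 0)
            - Q ^ k * (if k = 0 then 0 else C (k - 1) i j) :=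
        fun k _ => mul_sub _ _ _
      rw [Finset.sum_congr rfl split, Finset.sum_sub_distrib]
      have e1 : ∑ k ∈ Finset.range (N + 1), Q ^ k * (if k < N then (c * C k) i j else 0)
          = ∑ k ∈ Finset.range N, Q ^ k * (c * C k) i j := by
        rw [Finset.sum_range_succ, if_neg (lt_irrefl N), mul_zero, add_zero]
        exact Finset.sum_congr rfl fun k hk => by rw [if_pos (Finset.mem_range.mp hk)]
      have e2 : ∑ k ∈ Finset.range (N + 1), Q ^ k * (if k = 0 then 0 else C (k - 1) i j)
          = ∑ k ∈ Finset.range N, Q ^ (k + 1) * C k i j := by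
        rw [Finset.sum_range_succ'
          (fun k => Q ^ k * (if k = 0 then 0 else C (k - 1) i j)) N]
        simp
      rw [e1, e2]
      linear_combination hent
  constructor
  · refine Matrix.ext fun i j => ?_
    have h := hzero i j 0 (by omega) (by omega)
    rw [if_pos (by omega : (0:ℕ) < N), if_pos rfl, sub_zero] at h
    simpa using h
  · intro k hk1 hkq
    refine Matrix.ext fun i j => ?_
    have h := hzero i j k (by omega) (by omega)
    rw [if_pos (by omega : k < N), if_neg (by omega)] at h
    have h2 := sub_eq_zero.mp h
    simpa using h2
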